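/- Fix t ≥ 2, K ≤ t, bits a, a' ∈ {0,1}, and n ≥ 1. The number of binary strings v of length t with exactly K ones, v_1 = a, v_t = a', and ι(v ⊕ Sv) = 2n equals C_{K, n+aa'} · C_{t−K, n + (1−a)(1−a')}, where C_{K,m} is the number of compositions of K into m parts: C_{K,m} = binom(K−1, m−1) if K ≥ m > 0, C_{0,0} = 1, and 0 otherwise. -/

import Mathlib

def iota {t : ℕ} (w : Fin t → Bool) : ℕ := ∑ i, (w i).toNat

/-- The number of compositions of `K` into `m` positive parts. -/
def Ccomp (K m : ℕ) : ℕ :=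
  if K = 0 ∧ m = 0 then 1 else if 0 < m ∧ m ≤ K then (K - 1).choose (m - 1) else 0

lemma ccomp_eq_choose {K p : ℕ} (hK : 1 ≤ K) (hp : 1 ≤ p) :
    Ccomp K p = (K - 1).choose (p - 1) := by
  unfold Ccomp
  rcases le_or_gt p K with h | h
  · rw [if_neg (by omega), if_pos ⟨hp, h⟩]
  · rw [if_neg (by omega), if_neg (by omega), Nat.choose_eq_zero_of_lt (by omega)]

lemma ccomp_zero_right (K : ℕ) : Ccomp K 0 = if K = 0 then 1 else 0 := by
  unfold Ccomp; split_ifs <;> omega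

lemma ccomp_zero_left (p : ℕ) : Ccomp 0 p = if p = 0 then 1 else 0 := by
  unfold Ccomp; split_ifs <;> omega

lemma ccomp_one_right {K : ℕ} (hK : 1 ≤ K) : Ccomp K 1 = 1 := by
  rw [ccomp_eq_choose hK le_rfl]; simp

lemma ccomp_eq_zero {K p : ℕ} (h : K < p) : Ccomp K p = 0 := by
  unfold Ccomp; rw [if_neg (by omega), if_neg (by omega)]

lemma ccomp_pascal {K p : ℕ} (hK : 1 ≤ K) (hp : 1 ≤ p) :
    Ccomp K p = Ccomp (K - 1) p + Ccomp (K - 1) (p - 1) := by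
  rcases Nat.exists_eq_add_of_le hK with ⟨K', rfl⟩
  rcases Nat.exists_eq_add_of_le hp with ⟨p', rfl⟩
  simp only [Nat.add_sub_cancel_left] at *
  rw [ccomp_eq_choose hK hp]
  simp only [Nat.add_sub_cancel_left]
  rcases Nat.eq_zero_or_pos K' with rfl | hK'
  · rcases Nat.eq_zero_or_pos p' with rfl | hp'
    · simp [ccomp_zero_left]
    · rw [Nat.choose_eq_zero_of_lt (by omega)]
      rw [ccomp_zero_left, ccomp_zero_left, if_neg (by omega), if_neg (by omega)]
  · rcases Nat.eq_zero_or_pos p' with rfl | hp'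
    · rw [ccomp_one_right (by omega), ccomp_zero_right, if_neg (by omega)]
      simp
    · rw [ccomp_eq_choose (by omega) (by omega), ccomp_eq_choose (by omega) (by omega)]
      simp only [Nat.add_sub_cancel_left]
      have h3 : K' = (K' - 1) + 1 := by omega
      have h4 : p' = (p' - 1) + 1 := by omega
      rw [h3, h4, Nat.choose_succ_succ]
      simp only [Nat.succ_eq_add_one, ← h3, ← h4]
      omega

def F (t K c : ℕ) (a a' : Bool) : ℕ :=
  if K ≤ t ∧ ((a = a') ↔ c % 2 = 0) then
    Ccomp K ((c + 1 + a.toNat) / 2) * Ccomp (t - K) ((c + 2 - a.toNat) / 2) else 0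

lemma F_one (K c : ℕ) (a a' : Bool) :
    F 1 K c a a' = if a = a' ∧ K = a.toNat ∧ c = 0 then 1 else 0 := by
  unfold F
  by_cases h : K ≤ 1 ∧ ((a = a') ↔ c % 2 = 0)
  · rw [if_pos h]
    obtain ⟨h1, h2⟩ := h
    rcases Nat.lt_or_ge c 2 with hc | hc
    · interval_cases c <;> interval_cases K <;> cases a <;> cases a' <;>
        simp_all <;> simp [Ccomp] <;> omega
    · rw [if_neg (by omega)]
      cases a
      · -- r0 = (c+2)/2 ≥ 2 > 1 - K
        have : Ccomp (1 - K) ((c + 2 - (false : Bool).toNat) / 2) = 0 :=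
          ccomp_eq_zero (by simp; omega)
        rw [this, mul_zero]
      · have : Ccomp K ((c + 1 + (true : Bool).toNat) / 2) = 0 :=
          ccomp_eq_zero (by simp; omega)
        rw [this, zero_mul]
  · rw [if_neg h, if_neg ?_]
    rintro ⟨ha, hK, rfl⟩
    exact h ⟨by cases a <;> simp_all, by simp_all⟩

lemma F_rec (m K c : ℕ) (a a' : Bool) :
    F (m+2) K c a a' =
      if a = true ∧ K = 0 then 0 else
        F (m+1) (K - a.toNat) c a a' +
          if c = 0 then 0 else F (m+1) (K - a.toNat) (c-1) (!a) a' := by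
  cases a
  case false =>
    rw [if_neg (by simp)]
    simp only [Bool.toNat_false, Nat.sub_zero, Bool.not_false]
    have hcond2 : ∀ hc : 1 ≤ c, (((true : Bool) = a') ↔ (c-1) % 2 = 0) ↔
        (((false : Bool) = a') ↔ c % 2 = 0) := by
      intro hc; cases a' <;> simp <;> omega
    by_cases h : K ≤ m + 2 ∧ (((false : Bool) = a') ↔ c % 2 = 0)
    · obtain ⟨h1, h2⟩ := h
      rcases Nat.lt_or_ge K (m+2) with hlt | hge
      · rw [F, if_pos ⟨h1, h2⟩, F, if_pos ⟨by omega, h2⟩]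
        rcases Nat.eq_zero_or_pos c with rfl | hc
        · rw [if_pos rfl, add_zero]
          have d1 : (0 + 1 + (false:Bool).toNat) / 2 = 0 := by norm_num
          have d2 : (0 + 2 - (false:Bool).toNat) / 2 = 1 := by norm_num
          rw [d1, d2]
          rcases Nat.eq_zero_or_pos K with rfl | hK
          · simp only [Nat.sub_zero]
            rw [ccomp_one_right (by omega), ccomp_one_right (by omega)]
          · rw [ccomp_zero_right, if_neg (by omega), zero_mul, zero_mul]
        · rw [if_neg (by omega), F, if_pos ⟨by omega, (hcond2 hc).2 h2⟩]
          simp only [Bool.toNat_false, Bool.toNat_true, Nat.sub_zero]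
          have e1 : (c - 1 + 1 + 1) / 2 = (c + 1) / 2 := by omega
          have e2 : (c - 1 + 2 - 1) / 2 = (c + 2) / 2 - 1 := by omega
          have e3 : m + 1 - K = (m + 2 - K) - 1 := by omega
          rw [e1, e2, e3, ← Nat.mul_add, ← ccomp_pascal (by omega) (by omega)]
      · -- K = m + 2
        rw [F, if_pos ⟨h1, h2⟩, F, if_neg (by omega)]
        have : m + 2 - K = 0 := by omega
        rw [this, ccomp_zero_left,
          if_neg (by simp only [Bool.toNat_false, Nat.sub_zero]; omega),
          mul_zero, zero_add]
        rcases Nat.eq_zero_or_pos c with rfl | hc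
        · simp
        · rw [if_neg (by omega), F, if_neg (fun hh => absurd hh.1 (by omega))]
    · rw [F, if_neg (by simpa using h), F,
        if_neg (fun hh => h ⟨hh.1.trans (by omega), hh.2⟩), zero_add]
      rcases Nat.eq_zero_or_pos c with rfl | hc
      · simp
      · rw [if_neg (by omega), F,
          if_neg (fun hh => h ⟨hh.1.trans (by omega), (hcond2 hc).1 hh.2⟩)]
  case true =>
    rcases Nat.eq_zero_or_pos K with rfl | hK
    · rw [if_pos ⟨rfl, rfl⟩]
      unfold F
      by_cases h : (0:ℕ) ≤ m + 2 ∧ (((true:Bool) = a') ↔ c % 2 = 0)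
      · rw [if_pos h, ccomp_eq_zero (by simp), zero_mul]
      · rw [if_neg h]
    · rw [if_neg (by simp; omega)]
      simp only [Bool.toNat_true, Bool.not_true]
      have hcond2 : ∀ hc : 1 ≤ c, (((false : Bool) = a') ↔ (c-1) % 2 = 0) ↔
          (((true : Bool) = a') ↔ c % 2 = 0) := by
        intro hc; cases a' <;> simp <;> omega
      by_cases h : K ≤ m + 2 ∧ (((true : Bool) = a') ↔ c % 2 = 0)
      · obtain ⟨h1, h2⟩ := h
        rw [F, if_pos ⟨h1, h2⟩, F, if_pos ⟨by omega, h2⟩]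
        have et : m + 1 - (K - 1) = m + 2 - K := by omega
        rcases Nat.eq_zero_or_pos c with rfl | hc
        · rw [if_pos rfl, add_zero]
          have d1 : (0 + 1 + (true:Bool).toNat) / 2 = 1 := by norm_num
          have d2 : (0 + 2 - (true:Bool).toNat) / 2 = 0 := by norm_num
          rw [d1, d2, et]
          rcases Nat.lt_or_ge K (m+2) with hlt | hge
          · rw [ccomp_zero_right, if_neg (by omega), mul_zero, mul_zero]
          · rw [ccomp_one_right (by omega), ccomp_one_right (by omega)]
        · rw [if_neg (by omega), F, if_pos ⟨by omega, (hcond2 hc).2 h2⟩]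
          simp only [Bool.toNat_true, Bool.toNat_false, Nat.add_sub_cancel]
          have e1 : (c - 1 + 1 + 0) / 2 = (c + 1 + 1) / 2 - 1 := by omega
          have e2 : (c - 1 + 2 - 0) / 2 = (c + 2 - 1) / 2 := by omega
          rw [e1, e2, et, ← Nat.add_mul, ← ccomp_pascal (by omega) (by omega)]
      · rw [F, if_neg (by simpa using h), F,
          if_neg (fun hh => h ⟨by omega, hh.2⟩), zero_add]
        rcases Nat.eq_zero_or_pos c with rfl | hc
        · simp
        · rw [if_neg (by omega), F,
            if_neg (fun hh => h ⟨by omega, (hcond2 hc).1 hh.2⟩)]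

def lc {m : ℕ} (v : Fin (m+1) → Bool) : ℕ :=
  ∑ i : Fin m, (xor (v i.castSucc) (v i.succ)).toNat

def Nset (m K c : ℕ) (a a' : Bool) : Finset (Fin (m+1) → Bool) :=
  Finset.univ.filter (fun v => iota v = K ∧ v 0 = a ∧ v (Fin.last m) = a' ∧ lc v = c)

lemma iota_cons {m : ℕ} (b : Bool) (w : Fin m → Bool) :
    iota (Fin.cons b w) = b.toNat + iota w := by
  simp [iota, Fin.sum_univ_succ]

lemma lc_cons {m : ℕ} (b : Bool) (w : Fin (m+1) → Bool) :
    lc (Fin.cons b w : Fin (m+2) → Bool) = (xor b (w 0)).toNat + lc w := by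
  unfold lc
  rw [Fin.sum_univ_succ]
  simp only [Fin.castSucc_zero, Fin.cons_zero, ← Fin.succ_castSucc, Fin.cons_succ]

lemma cons_last {m : ℕ} (b : Bool) (w : Fin (m+1) → Bool) :
    (Fin.cons b w : Fin (m+2) → Bool) (Fin.last (m+1)) = w (Fin.last m) := by
  rw [← Fin.succ_last, Fin.cons_succ]

lemma first_le_iota {m : ℕ} (v : Fin (m+1) → Bool) : (v 0).toNat ≤ iota v :=
  Finset.single_le_sum (f := fun i => (v i).toNat) (fun i _ => Nat.zero_le _)
    (Finset.mem_univ 0)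

lemma nset_zero (K c : ℕ) (a a' : Bool) :
    (Nset 0 K c a a').card = if a = a' ∧ K = a.toNat ∧ c = 0 then 1 else 0 := by
  by_cases h : a = a' ∧ K = a.toNat ∧ c = 0
  · rw [if_pos h]
    obtain ⟨rfl, rfl, rfl⟩ := h
    rw [Finset.card_eq_one]
    refine ⟨fun _ => a, ?_⟩
    ext v
    simp only [Nset, Finset.mem_filter, Finset.mem_univ, true_and, Finset.mem_singleton]
    constructor
    · rintro ⟨h1, h2, h3, h4⟩
      funext i
      rw [show i = 0 from Fin.ext (by omega), h2]
    · rintro rfl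
      refine ⟨?_, rfl, rfl, ?_⟩
      · simp [iota]
      · simp [lc]
  · rw [if_neg h, Finset.card_eq_zero, Finset.eq_empty_iff_forall_notMem]
    intro v hv
    simp only [Nset, Finset.mem_filter, Finset.mem_univ, true_and] at hv
    obtain ⟨h1, h2, h3, h4⟩ := hv
    exact h ⟨by rw [← h2, ← h3]; rfl, by rw [← h1, ← h2]; simp [iota], by rw [← h4]; simp [lc]⟩

lemma nset_succ (m K c : ℕ) (a a' : Bool) :
    (Nset (m+1) K c a a').card =
      if a = true ∧ K = 0 then 0 else
        (Nset m (K - a.toNat) c a a').card +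
          if c = 0 then 0 else (Nset m (K - a.toNat) (c-1) (!a) a').card := by
  by_cases hguard : a = true ∧ K = 0
  · rw [if_pos hguard]
    obtain ⟨rfl, rfl⟩ := hguard
    rw [Finset.card_eq_zero, Finset.eq_empty_iff_forall_notMem]
    intro v hv
    simp only [Nset, Finset.mem_filter, Finset.mem_univ, true_and] at hv
    obtain ⟨h1, h2, -, -⟩ := hv
    have := first_le_iota v
    rw [h1, h2] at this
    simp at this
  · rw [if_neg hguard]
    have ha : a.toNat ≤ K := by
      cases a
      · simp
      · have : K ≠ 0 := fun hk => hguard ⟨rfl, hk⟩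
        simp only [Bool.toNat_true]
        omega
    have key : Nset (m+1) K c a a' =
        ((Nset m (K - a.toNat) c a a') ∪
          (if c = 0 then ∅ else Nset m (K - a.toNat) (c-1) (!a) a')).map
          ⟨Fin.cons a, Fin.cons_right_injective (α := fun _ => Bool) a⟩ := by
      ext v
      simp only [Nset, Finset.mem_map, Finset.mem_union, Finset.mem_filter,
        Finset.mem_univ, true_and, Function.Embedding.coeFn_mk]
      constructor
      · rintro ⟨hiota, h0, hlast, hlc⟩
        refine ⟨Fin.tail v, ?_, by rw [← h0]; exact Fin.cons_self_tail v⟩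
        set w := Fin.tail v with hw
        have hv : v = Fin.cons a w := by rw [← h0, hw]; exact (Fin.cons_self_tail v).symm
        rw [hv, iota_cons] at hiota
        rw [hv, cons_last] at hlast
        rw [hv, lc_cons] at hlc
        by_cases hw0 : w 0 = a
        · left
          rw [hw0] at hlc
          simp only [bne_self_eq_false, Bool.toNat_false, zero_add] at hlc
          exact ⟨by omega, hw0, hlast, hlc⟩
        · right
          have hw0' : w 0 = !a := by
            cases hb : w 0 <;> cases a
            · exact absurd hb hw0
            · rfl
            · rfl
            · exact absurd hb hw0
          have hxa : (xor a (!a)) = true := by cases a <;> rfl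
          rw [hw0', hxa] at hlc
          simp only [Bool.toNat_true] at hlc
          have hc : c ≠ 0 := by omega
          rw [if_neg hc]
          simp only [Finset.mem_filter, Finset.mem_univ, true_and]
          exact ⟨by omega, hw0', hlast, by omega⟩
      · rintro ⟨w, hw, rfl⟩
        rcases hw with hw | hw
        · obtain ⟨h1, h2, h3, h4⟩ := hw
          refine ⟨by rw [iota_cons]; omega, by simp, ?_, ?_⟩
          · rw [cons_last]; exact h3
          · rw [lc_cons, h2]
            simp [h4]
        · rcases Nat.eq_zero_or_pos c with rfl | hc
          · simp at hw
          · rw [if_neg (by omega)] at hw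
            simp only [Finset.mem_filter, Finset.mem_univ, true_and] at hw
            obtain ⟨h1, h2, h3, h4⟩ := hw
            refine ⟨by rw [iota_cons]; omega, by simp, ?_, ?_⟩
            · rw [cons_last]; exact h3
            · rw [lc_cons, h2]
              have hxa : (xor a (!a)) = true := by cases a <;> rfl
              rw [hxa, h4]
              simp only [Bool.toNat_true]
              omega
    rw [key, Finset.card_map]
    rcases Nat.eq_zero_or_pos c with rfl | hc
    · simp
    · rw [if_neg (by omega), if_neg (by omega)]
      rw [Finset.card_union_of_disjoint]
      rw [Finset.disjoint_left]
      intro w hw1 hw2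
      simp only [Nset, Finset.mem_filter, Finset.mem_univ, true_and] at hw1 hw2
      have e1 := hw1.2.1
      have e2 := hw2.2.1
      rw [e1] at e2
      cases a <;> simp at e2

lemma nset_card (m K c : ℕ) (a a' : Bool) :
    (Nset m K c a a').card = F (m+1) K c a a' := by
  induction m generalizing K c a a' with
  | zero => rw [nset_zero, F_one]
  | succ m ih => rw [nset_succ, F_rec, ih, ih]

theorem stmt6 (t K n : ℕ) (ht : 2 ≤ t) (hK : K ≤ t) (hn : 1 ≤ n) (a a' : Bool) :
    (Finset.univ.filter (fun v : Fin t → Bool =>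
        iota v = K ∧ v ⟨0, by omega⟩ = a ∧ v ⟨t - 1, by omega⟩ = a' ∧
        iota (fun i => xor (v i) (v ⟨(i.val + 1) % t, Nat.mod_lt _ (by omega)⟩)) = 2 * n)).card =
      Ccomp K (n + (a && a').toNat) * Ccomp (t - K) (n + (!a && !a').toNat) := by
  obtain ⟨m, rfl⟩ : ∃ m, t = m + 1 := ⟨t - 1, by omega⟩
  have hm : 1 ≤ m := by omega
  have step1 : (Finset.univ.filter (fun v : Fin (m+1) → Bool =>
      iota v = K ∧ v ⟨0, by omega⟩ = a ∧ v ⟨m + 1 - 1, by omega⟩ = a' ∧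
      iota (fun i => xor (v i) (v ⟨(i.val + 1) % (m+1), Nat.mod_lt _ (by omega)⟩)) = 2 * n)) =
      Nset m K (2 * n - (xor a' a).toNat) a a' := by
    ext v
    simp only [Nset, Finset.mem_filter, Finset.mem_univ, true_and]
    have e0 : (⟨0, by omega⟩ : Fin (m+1)) = 0 := Fin.ext (by simp)
    have elast : (⟨m + 1 - 1, by omega⟩ : Fin (m+1)) = Fin.last m := Fin.ext (by simp)
    have hcyc : iota (fun i : Fin (m+1) =>
        xor (v i) (v ⟨(i.val + 1) % (m+1), Nat.mod_lt _ (by omega)⟩)) =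
        lc v + (xor (v (Fin.last m)) (v 0)).toNat := by
      unfold iota lc
      rw [Fin.sum_univ_castSucc]
      congr 1
      · apply Finset.sum_congr rfl
        intro j _
        dsimp only
        congr 3
        apply Fin.ext
        simp only [Fin.coe_castSucc, Fin.val_succ]
        exact Nat.mod_eq_of_lt (by have := j.isLt; omega)
      · dsimp only
        congr 3
        apply Fin.ext
        simp [Fin.val_last]
    rw [e0, elast, hcyc]
    constructor
    · rintro ⟨h1, h2, h3, h4⟩
      rw [h2, h3] at h4
      exact ⟨h1, h2, h3, by omega⟩
    · rintro ⟨h1, h2, h3, h4⟩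
      rw [h2, h3, h4]
      have hle : (xor a' a).toNat ≤ 2 * n := by
        cases a <;> cases a' <;> simp <;> omega
      exact ⟨h1, rfl, rfl, by omega⟩
  rw [step1, nset_card]
  cases a <;> cases a'
  · -- false false
    have hx : (xor (false:Bool) false).toNat = 0 := rfl
    rw [hx, Nat.sub_zero]
    unfold F
    rw [if_pos ⟨hK, iff_of_true rfl (by omega)⟩]
    have e1 : (2*n + 1 + (false:Bool).toNat) / 2 = n := by
      simp only [Bool.toNat_false]; omega
    have e2 : (2*n + 2 - (false:Bool).toNat) / 2 = n + 1 := by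
      simp only [Bool.toNat_false]; omega
    rw [e1, e2]
    simp
  · -- a = false, a' = true
    have hx : (xor (true:Bool) false).toNat = 1 := rfl
    rw [hx]
    unfold F
    rw [if_pos ⟨hK, iff_of_false (by simp) (by omega)⟩]
    have e1 : (2*n - 1 + 1 + (false:Bool).toNat) / 2 = n := by
      simp only [Bool.toNat_false]; omega
    have e2 : (2*n - 1 + 2 - (false:Bool).toNat) / 2 = n := by
      simp only [Bool.toNat_false]; omega
    rw [e1, e2]
    simp
  · -- a = true, a' = false
    have hx : (xor (false:Bool) true).toNat = 1 := rfl
    rw [hx]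
    unfold F
    rw [if_pos ⟨hK, iff_of_false (by simp) (by omega)⟩]
    have e1 : (2*n - 1 + 1 + (true:Bool).toNat) / 2 = n := by
      simp only [Bool.toNat_true]; omega
    have e2 : (2*n - 1 + 2 - (true:Bool).toNat) / 2 = n := by
      simp only [Bool.toNat_true]; omega
    rw [e1, e2]
    simp
  · -- true true
    have hx : (xor (true:Bool) true).toNat = 0 := rfl
    rw [hx, Nat.sub_zero]
    unfold F
    rw [if_pos ⟨hK, iff_of_true rfl (by omega)⟩]
    have e1 : (2*n + 1 + (true:Bool).toNat) / 2 = n + 1 := by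
      simp only [Bool.toNat_true]; omega
    have e2 : (2*n + 2 - (true:Bool).toNat) / 2 = n := by
      simp only [Bool.toNat_true]; omega
    rw [e1, e2]
    simp
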